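/- Every infinite set of natural numbers has a cohesive subset. -/

import Mathlib

def Cohesive (C : Set ℕ) : Prop :=
  C.Infinite ∧ ∀ W : Set ℕ, REPred (· ∈ W) → (W ∩ C).Finite ∨ (Wᶜ ∩ C).Finite

open Classical

/-- Enumeration of all c.e. sets via codes. -/
noncomputable def enumW : ℕ → Set ℕ :=
  fun n => {m | ((Denumerable.ofNat Nat.Partrec.Code n).eval m).Dom}

lemma enumW_surj (W : Set ℕ) (h : REPred (· ∈ W)) : ∃ n, enumW n = W := by
  unfold REPred Partrec at h
  obtain ⟨c, hc⟩ := Nat.Partrec.Code.exists_code.1 h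
  refine ⟨Encodable.encode c, ?_⟩
  unfold enumW
  ext m
  simp [Denumerable.ofNat_encode, hc, Part.assert, Encodable.decode]

noncomputable def chain (X : Set ℕ) : ℕ → Set ℕ
  | 0 => X
  | n+1 => if ((enumW n) ∩ chain X n).Infinite then enumW n ∩ chain X n
           else (enumW n)ᶜ ∩ chain X n

lemma chain_infinite (X : Set ℕ) (hX : X.Infinite) : ∀ n, (chain X n).Infinite := by
  intro n
  induction n with
  | zero => exact hX
  | succ n ih =>
    by_cases h : ((enumW n) ∩ chain X n).Infinite
    · simpa [chain, h] using h
    · have : ((enumW n)ᶜ ∩ chain X n).Infinite := by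
        have hfin : ((enumW n) ∩ chain X n).Finite := Set.not_infinite.1 h
        have : (chain X n \ enumW n).Infinite := by
          have := ih.diff hfin
          refine this.mono ?_
          intro x hx
          rcases hx with ⟨hx1, hx2⟩
          exact ⟨hx1, fun hw => hx2 ⟨hw, hx1⟩⟩
        refine this.mono ?_
        intro x hx
        exact ⟨hx.2, hx.1⟩
      simpa [chain, h] using this

lemma chain_succ_subset (X : Set ℕ) (n : ℕ) : chain X (n+1) ⊆ chain X n := by
  by_cases h : ((enumW n) ∩ chain X n).Infinite
  · simp only [chain, if_pos h]; exact Set.inter_subset_right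
  · simp only [chain, if_neg h]; exact Set.inter_subset_right

lemma chain_subset (X : Set ℕ) : ∀ {m n : ℕ}, n ≤ m → chain X m ⊆ chain X n := by
  intro m
  induction m with
  | zero => intro n hn; simp_all
  | succ m ih =>
    intro n hn
    rcases Nat.lt_or_ge n (m+1) with h | h
    · exact (chain_succ_subset X m).trans (ih (Nat.lt_succ_iff.mp h))
    · have : n = m + 1 := le_antisymm hn h
      subst this; exact fun x hx => hx

lemma chain_subset_X (X : Set ℕ) (n : ℕ) : chain X n ⊆ X :=
  chain_subset X (Nat.zero_le n)

noncomputable def pick (X : Set ℕ) (hX : X.Infinite) : ℕ → ℕ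
  | 0 => (chain_infinite X hX 0).nonempty.choose
  | n+1 => ((chain_infinite X hX (n+1)).exists_gt (pick X hX n)).choose

lemma pick_mem (X : Set ℕ) (hX : X.Infinite) : ∀ n, pick X hX n ∈ chain X n
  | 0 => (chain_infinite X hX 0).nonempty.choose_spec
  | n+1 => ((chain_infinite X hX (n+1)).exists_gt (pick X hX n)).choose_spec.1

lemma pick_lt (X : Set ℕ) (hX : X.Infinite) (n : ℕ) : pick X hX n < pick X hX (n+1) :=
  ((chain_infinite X hX (n+1)).exists_gt (pick X hX n)).choose_spec.2

lemma pick_strictMono (X : Set ℕ) (hX : X.Infinite) : StrictMono (pick X hX) :=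
  strictMono_nat_of_lt_succ (pick_lt X hX)

theorem exists_cohesive_subset (X : Set ℕ) (hX : X.Infinite) :
    ∃ C : Set ℕ, C ⊆ X ∧ Cohesive C := by
  refine ⟨Set.range (pick X hX), ?_, ?_, ?_⟩
  · rintro x ⟨n, rfl⟩
    exact chain_subset_X X n (pick_mem X hX n)
  · exact Set.infinite_range_of_injective (pick_strictMono X hX).injective
  · intro W hW
    obtain ⟨n, rfl⟩ := enumW_surj W hW
    have key : ∀ S : Set ℕ, chain X (n+1) ⊆ S →
        (Sᶜ ∩ Set.range (pick X hX)).Finite := by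
      intro S hS
      have hsub : Sᶜ ∩ Set.range (pick X hX) ⊆ (pick X hX) '' (Set.Iic n) := by
        rintro x ⟨hxc, m, rfl⟩
        by_contra hm
        have hmn : n + 1 ≤ m := by
          by_contra hc
          exact hm ⟨m, Nat.lt_succ_iff.mp (not_le.mp hc), rfl⟩
        exact hxc (hS (chain_subset X hmn (pick_mem X hX m)))
      exact ((Set.finite_Iic n).image _).subset hsub
    by_cases h : ((enumW n) ∩ chain X n).Infinite
    · right
      apply key
      simp only [chain, if_pos h]
      exact Set.inter_subset_left
    · left
      have : (enumW n)ᶜᶜ = enumW n := compl_compl _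
      rw [← this]
      apply key
      simp only [chain, if_neg h]
      exact Set.inter_subset_left
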